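/- Let n ≥ 1, let M, K ∈ ℝ^{n×n} be skew-symmetric matrices, let S : ℝⁿ → ℝ be continuously differentiable, and let z : ℝ² → ℝⁿ be twice continuously differentiable and satisfy M ∂ₜz(x,t) + K ∂ₓz(x,t) = ∇S(z(x,t)) for all (x,t) ∈ ℝ². Define the momentum density I(x,t) = ½⟨z(x,t), M ∂ₓz(x,t)⟩ and the momentum flux G(x,t) = S(z(x,t)) − ½⟨z(x,t), M ∂ₜz(x,t)⟩. Then the momentum conservation law ∂ₜI(x,t) + ∂ₓG(x,t) = 0 holds for all (x,t) ∈ ℝ². -/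

import Mathlib

open scoped RealInnerProductSpace
open Matrix

lemma skew_inner_aux (n : ℕ) (M : Matrix (Fin n) (Fin n) ℝ) (hM : Mᵀ = -M)
    (u v : EuclideanSpace ℝ (Fin n)) :
    ⟪u, (WithLp.toLp 2 (M.mulVec (WithLp.ofLp v)) : EuclideanSpace ℝ (Fin n))⟫
      = -⟪v, (WithLp.toLp 2 (M.mulVec (WithLp.ofLp u)) : EuclideanSpace ℝ (Fin n))⟫ := by
  have h : WithLp.ofLp u ⬝ᵥ M.mulVec (WithLp.ofLp v)
      = -(WithLp.ofLp v ⬝ᵥ M.mulVec (WithLp.ofLp u)) := by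
    rw [Matrix.dotProduct_mulVec, ← Matrix.mulVec_transpose, hM, Matrix.neg_mulVec,
      neg_dotProduct, dotProduct_comm]
  simpa [PiLp.inner_apply, RCLike.inner_apply, dotProduct, mul_comm] using h

theorem stmt1 (n : ℕ) (hn : 1 ≤ n)
    (M K : Matrix (Fin n) (Fin n) ℝ)
    (hM : Mᵀ = -M) (hK : Kᵀ = -K)
    (S : EuclideanSpace ℝ (Fin n) → ℝ) (hS : ContDiff ℝ 1 S)
    (z : ℝ → ℝ → EuclideanSpace ℝ (Fin n))
    (hz : ContDiff ℝ 2 (Function.uncurry z))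
    (hpde : ∀ x t : ℝ,
      (WithLp.toLp 2 (M.mulVec (WithLp.ofLp (deriv (fun s => z x s) t))) : EuclideanSpace ℝ (Fin n))
        + (WithLp.toLp 2 (K.mulVec (WithLp.ofLp (deriv (fun y => z y t) x))) : EuclideanSpace ℝ (Fin n))
        = gradient S (z x t))
    (I G : ℝ → ℝ → ℝ)
    (hI : ∀ x t : ℝ, I x t =
      (1 / 2) * ⟪z x t, (WithLp.toLp 2 (M.mulVec (WithLp.ofLp (deriv (fun y => z y t) x))) : EuclideanSpace ℝ (Fin n))⟫)
    (hG : ∀ x t : ℝ, G x t = S (z x t)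
      - (1 / 2) * ⟪z x t, (WithLp.toLp 2 (M.mulVec (WithLp.ofLp (deriv (fun s => z x s) t))) : EuclideanSpace ℝ (Fin n))⟫) :
    ∀ x t : ℝ, deriv (fun s => I x s) t + deriv (fun y => G y t) x = 0 := by
  intro x t
  let E := EuclideanSpace ℝ (Fin n)
  let A : E →L[ℝ] E := LinearMap.toContinuousLinearMap
    (Matrix.toEuclideanLin M : E →ₗ[ℝ] E)
  have hAv : ∀ v : E, A v = (WithLp.toLp 2 (M.mulVec (WithLp.ofLp v)) : E) := fun _ => rfl
  let L : E →L[ℝ] (Fin n → ℝ) :=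
    (PiLp.continuousLinearEquiv 2 ℝ (fun _ : Fin n => ℝ) : E →L[ℝ] (Fin n → ℝ))
  have hfd : Differentiable ℝ (Function.uncurry z) := hz.differentiable (by norm_num)
  set F := fderiv ℝ (Function.uncurry z) with hF
  have hF1 : ContDiff ℝ 1 F := hz.fderiv_right (by norm_num)
  -- partial derivatives (Euclidean-valued)
  have hzx : ∀ a b : ℝ, HasDerivAt (fun y => z y b) (F (a, b) (1, 0)) a := by
    intro a b
    have h2 : HasDerivAt (fun y : ℝ => ((y, b) : ℝ × ℝ)) ((1 : ℝ), (0 : ℝ)) a :=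
      HasDerivAt.prodMk (hasDerivAt_id a) (hasDerivAt_const a b)
    exact (hfd (a, b)).hasFDerivAt.comp_hasDerivAt a h2
  have hzt : ∀ a b : ℝ, HasDerivAt (fun s => z a s) (F (a, b) (0, 1)) b := by
    intro a b
    have h2 : HasDerivAt (fun s : ℝ => ((a, s) : ℝ × ℝ)) ((0 : ℝ), (1 : ℝ)) b :=
      HasDerivAt.prodMk (hasDerivAt_const b a) (hasDerivAt_id b)
    exact (hfd (a, b)).hasFDerivAt.comp_hasDerivAt b h2
  -- Pi-valued derivatives (matching the statement's elaboration)
  have hpx : ∀ a b : ℝ, deriv (fun y => z y b) a = F (a, b) (1, 0) := by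
    intro a b
    exact (hzx a b).deriv
  have hpt : ∀ a b : ℝ, deriv (fun s => z a s) b = F (a, b) (0, 1) := by
    intro a b
    exact (hzt a b).deriv
  -- second derivative and symmetry
  set F2 := fderiv ℝ F (x, t) with hF2
  have hFd : HasFDerivAt F F2 (x, t) := ((hF1.differentiable one_ne_zero) (x, t)).hasFDerivAt
  have hsymm : F2 (1, 0) (0, 1) = F2 (0, 1) (1, 0) :=
    second_derivative_symmetric (fun q => (hfd q).hasFDerivAt) hFd _ _
  -- mixed partials as HasDerivAt
  have hmixt : HasDerivAt (fun s => F (x, s) (1, 0)) (F2 (0, 1) (1, 0)) t := by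
    have h2 : HasDerivAt (fun s : ℝ => ((x, s) : ℝ × ℝ)) ((0 : ℝ), (1 : ℝ)) t :=
      HasDerivAt.prodMk (hasDerivAt_const t x) (hasDerivAt_id t)
    have h3 : HasDerivAt (fun s => F (x, s)) (F2 (0, 1)) t := hFd.comp_hasDerivAt t h2
    exact (ContinuousLinearMap.apply ℝ E ((1 : ℝ), (0 : ℝ))).hasFDerivAt.comp_hasDerivAt t h3
  have hmixx : HasDerivAt (fun y => F (y, t) (0, 1)) (F2 (1, 0) (0, 1)) x := by
    have h2 : HasDerivAt (fun y : ℝ => ((y, t) : ℝ × ℝ)) ((1 : ℝ), (0 : ℝ)) x :=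
      HasDerivAt.prodMk (hasDerivAt_id x) (hasDerivAt_const x t)
    have h3 : HasDerivAt (fun y => F (y, t)) (F2 (1, 0)) x := hFd.comp_hasDerivAt x h2
    exact (ContinuousLinearMap.apply ℝ E ((0 : ℝ), (1 : ℝ))).hasFDerivAt.comp_hasDerivAt x h3
  rw [hsymm] at hmixx
  -- abbreviations
  set a : E := F (x, t) (0, 1) with ha
  set b : E := F (x, t) (1, 0) with hb
  set c : E := F2 (0, 1) (1, 0) with hc
  set w : E := z x t with hw
  -- derivative of I x ·
  have hIfun : (fun s => I x s) = fun s => (1 / 2) * ⟪z x s, A (F (x, s) (1, 0))⟫ := by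
    funext s
    rw [hI, hpx x s]
    rfl
  have hIinner : HasDerivAt (fun s => ⟪z x s, A (F (x, s) (1, 0))⟫)
      (⟪w, A c⟫ + ⟪a, A b⟫) t :=
    HasDerivAt.inner ℝ (hzt x t) (A.hasFDerivAt.comp_hasDerivAt t hmixt)
  have hderI : deriv (fun s => I x s) t = (1 / 2) * (⟪w, A c⟫ + ⟪a, A b⟫) := by
    rw [hIfun]
    exact (hIinner.const_mul (1 / 2 : ℝ)).deriv
  -- derivative of G · t
  have hGfun : (fun y => G y t)
      = fun y => S (z y t) - (1 / 2) * ⟪z y t, A (F (y, t) (0, 1))⟫ := by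
    funext y
    rw [hG, hpt y t]
    rfl
  have hSz : HasDerivAt (fun y => S (z y t)) (⟪gradient S w, b⟫) x := by
    have h := ((hS.differentiable one_ne_zero) w).hasGradientAt.hasFDerivAt.comp_hasDerivAt x (hzx x t)
    simpa [Function.comp_def, hb] using h
  have hGinner : HasDerivAt (fun y => ⟪z y t, A (F (y, t) (0, 1))⟫)
      (⟪w, A c⟫ + ⟪b, A a⟫) x :=
    HasDerivAt.inner ℝ (hzx x t) (A.hasFDerivAt.comp_hasDerivAt x hmixx)
  have hderG : deriv (fun y => G y t) x
      = ⟪gradient S w, b⟫ - (1 / 2) * (⟪w, A c⟫ + ⟪b, A a⟫) := by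
    rw [hGfun]
    exact (hSz.sub (hGinner.const_mul (1 / 2 : ℝ))).deriv
  -- the PDE at (x, t)
  have hpde' : (WithLp.toLp 2 (M.mulVec (WithLp.ofLp a)) : E)
      + (WithLp.toLp 2 (K.mulVec (WithLp.ofLp b)) : E) = gradient S w := by
    have h := hpde x t
    rw [hpt x t, hpx x t] at h
    exact h
  -- algebraic conclusion
  have e1 : ⟪b, A a⟫ = -⟪a, A b⟫ := by
    rw [hAv, hAv]
    exact skew_inner_aux n M hM b a
  have e2 : ⟪gradient S w, b⟫ = -⟪a, A b⟫ := by
    rw [← hpde', inner_add_left, hAv]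
    have h1 := skew_inner_aux n K hK b b
    have h2 := real_inner_comm b (WithLp.toLp 2 (K.mulVec (WithLp.ofLp b)) : EuclideanSpace ℝ (Fin n))
    have h3 := skew_inner_aux n M hM b a
    have h4 := real_inner_comm b (WithLp.toLp 2 (M.mulVec (WithLp.ofLp a)) : EuclideanSpace ℝ (Fin n))
    linarith
  rw [hderI, hderG, e1, e2]
  ring
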